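/- Let d ≥ 1, c ∈ ℝ^d, r > 0, let B = {x ∈ ℝ^d : ‖x − c‖ < r}, and let l ≥ 1 be an integer. Then the number of multi-indices j ∈ {0,…,2^l−1}^d for which the level-l dyadic cube ∏_{i=1}^d [j_i·2^{-l}, (j_i+1)·2^{-l}] is contained in B while the level-(l−1) dyadic cube ∏_{i=1}^d [⌊j_i/2⌋·2^{-(l−1)}, (⌊j_i/2⌋+1)·2^{-(l−1)}] containing it is not contained in B is at most 2^d times the number of multi-indices k ∈ {0,…,2^{l−1}−1}^d for which the level-(l−1) dyadic cube ∏_{i=1}^d [k_i·2^{-(l−1)}, (k_i+1)·2^{-(l−1)}] intersects the sphere {x ∈ ℝ^d : ‖x − c‖ = r}. -/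

import Mathlib

/-- The level-`l` dyadic cube of `[0,1]^d` with multi-index `j`:
`∏ᵢ [jᵢ·2^{-l}, (jᵢ+1)·2^{-l}]`. -/
def dyadicCube (d l : ℕ) (j : Fin d → ℕ) : Set (EuclideanSpace ℝ (Fin d)) :=
  {x | ∀ i, (j i : ℝ) / 2 ^ l ≤ x i ∧ x i ≤ ((j i : ℝ) + 1) / 2 ^ l}

lemma dyadicCube_convex (d l : ℕ) (j : Fin d → ℕ) : Convex ℝ (dyadicCube d l j) := by
  intro x hx y hy a b ha hb hab
  intro i
  obtain ⟨hx1, hx2⟩ := hx i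
  obtain ⟨hy1, hy2⟩ := hy i
  have h : (a • x + b • y) i = a * x i + b * y i := by
    simp [PiLp.add_apply, PiLp.smul_apply, smul_eq_mul]
  have hL : a * ((j i : ℝ) / 2 ^ l) + b * ((j i : ℝ) / 2 ^ l) = (j i : ℝ) / 2 ^ l := by
    rw [← add_mul, hab, one_mul]
  have hU : a * (((j i : ℝ) + 1) / 2 ^ l) + b * (((j i : ℝ) + 1) / 2 ^ l)
      = ((j i : ℝ) + 1) / 2 ^ l := by
    rw [← add_mul, hab, one_mul]
  constructor
  · rw [h]
    linarith [mul_le_mul_of_nonneg_left hx1 ha, mul_le_mul_of_nonneg_left hy1 hb]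
  · rw [h]
    linarith [mul_le_mul_of_nonneg_left hx2 ha, mul_le_mul_of_nonneg_left hy2 hb]

lemma dyadicCube_subset_parent (d l : ℕ) (hl : 1 ≤ l) (j : Fin d → ℕ) :
    dyadicCube d l j ⊆ dyadicCube d (l - 1) (fun i => j i / 2) := by
  intro x hx i
  obtain ⟨h1, h2⟩ := hx i
  have h2l : (2 : ℝ) ^ l = 2 * 2 ^ (l - 1) := by
    rw [← pow_succ']
    congr 1
    omega
  have hp : (0 : ℝ) < 2 ^ (l - 1) := by positivity
  have hp' : (0 : ℝ) < 2 ^ l := by positivity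
  have hA : ((j i / 2 : ℕ) : ℝ) * 2 ≤ (j i : ℝ) := by
    have := Nat.div_mul_le_self (j i) 2
    exact_mod_cast this
  have hB : (j i : ℝ) ≤ ((j i / 2 : ℕ) : ℝ) * 2 + 1 := by
    have : j i ≤ j i / 2 * 2 + 1 := by omega
    exact_mod_cast this
  constructor
  · rw [div_le_iff₀ hp] at *
    have h1' : (j i : ℝ) ≤ x i * 2 ^ l := by
      rw [div_le_iff₀ hp'] at h1; exact h1
    nlinarith
  · rw [le_div_iff₀ hp] at *
    have h2' : x i * 2 ^ l ≤ (j i : ℝ) + 1 := by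
      rw [le_div_iff₀ hp'] at h2; exact h2
    nlinarith

/-- A convex set containing a point inside the ball and a point outside it meets the sphere. -/
lemma convex_meets_sphere {d : ℕ} {s : Set (EuclideanSpace ℝ (Fin d))}
    (hs : Convex ℝ s) {c : EuclideanSpace ℝ (Fin d)} {r : ℝ}
    {x y : EuclideanSpace ℝ (Fin d)} (hx : x ∈ s) (hy : y ∈ s)
    (hxr : dist x c < r) (hyr : r ≤ dist y c) :
    (s ∩ Metric.sphere c r).Nonempty := by
  set f : ℝ → ℝ := fun t => dist (x + t • (y - x)) c with hf
  have hcont : Continuous f := by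
    apply Continuous.dist _ continuous_const
    continuity
  have h0 : f 0 = dist x c := by simp [hf]
  have h1 : f 1 = dist y c := by simp [hf]
  have hmem : r ∈ Set.Icc (f 0) (f 1) := by
    rw [h0, h1]; exact ⟨le_of_lt hxr, hyr⟩
  have := intermediate_value_Icc (zero_le_one) hcont.continuousOn hmem
  obtain ⟨t, ht, htf⟩ := this
  refine ⟨x + t • (y - x), hs.add_smul_sub_mem hx hy ht, ?_⟩
  simpa [Metric.mem_sphere, hf, dist_eq_norm] using htf

theorem stmt_16 (d : ℕ) (hd : 1 ≤ d)
    (c : EuclideanSpace ℝ (Fin d)) (r : ℝ) (hr : 0 < r)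
    (l : ℕ) (hl : 1 ≤ l) :
    {j : Fin d → Fin (2 ^ l) |
        dyadicCube d l (fun i => (j i : ℕ)) ⊆ Metric.ball c r ∧
        ¬ dyadicCube d (l - 1) (fun i => (j i : ℕ) / 2) ⊆ Metric.ball c r}.ncard ≤
      2 ^ d *
        {k : Fin d → Fin (2 ^ (l - 1)) |
          (dyadicCube d (l - 1) (fun i => (k i : ℕ)) ∩
            Metric.sphere c r).Nonempty}.ncard := by
  classical
  set P : (Fin d → Fin (2 ^ l)) → Prop := fun j =>
    dyadicCube d l (fun i => (j i : ℕ)) ⊆ Metric.ball c r ∧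
    ¬ dyadicCube d (l - 1) (fun i => (j i : ℕ) / 2) ⊆ Metric.ball c r with hP
  set Q : (Fin d → Fin (2 ^ (l - 1))) → Prop := fun k =>
    (dyadicCube d (l - 1) (fun i => (k i : ℕ)) ∩ Metric.sphere c r).Nonempty with hQ
  have hhalf : ∀ m : ℕ, m < 2 ^ l → m / 2 < 2 ^ (l - 1) := by
    intro m hm
    have : 2 ^ l = 2 ^ (l - 1) * 2 := by
      rw [← pow_succ]; congr 1; omega
    omega
  set f : (Fin d → Fin (2 ^ l)) → (Fin d → Fin (2 ^ (l - 1))) := fun j i =>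
    ⟨(j i : ℕ) / 2, hhalf _ (j i).isLt⟩ with hfdef
  have hS : {j | P j} = ↑(Finset.univ.filter P) := by ext j; simp
  have hT : {k | Q k} = ↑(Finset.univ.filter Q) := by ext k; simp
  rw [hS, hT, Set.ncard_coe_finset, Set.ncard_coe_finset]
  apply Finset.card_le_mul_card_image_of_maps_to (f := f)
  · -- maps to
    intro j hj
    simp only [Finset.mem_filter, Finset.mem_univ, true_and] at hj ⊢
    obtain ⟨hball, hnot⟩ := hj
    -- a point of the child cube, hence of the parent cube, inside the ball
    set pt : EuclideanSpace ℝ (Fin d) :=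
      WithLp.toLp 2 (fun i => ((j i : ℕ) : ℝ) / 2 ^ l : ∀ _ : Fin d, ℝ) with hpt
    have hptmem : pt ∈ dyadicCube d l (fun i => (j i : ℕ)) := by
      intro i
      constructor
      · exact le_refl _
      · apply div_le_div_of_nonneg_right _ (by positivity)
        · linarith
    have hptparent : pt ∈ dyadicCube d (l - 1) (fun i => (j i : ℕ) / 2) :=
      dyadicCube_subset_parent d l hl _ hptmem
    have hptball : dist pt c < r := by
      have := hball hptmem
      rwa [Metric.mem_ball] at this
    obtain ⟨y, hy, hyout⟩ : ∃ y ∈ dyadicCube d (l - 1) (fun i => (j i : ℕ) / 2),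
        y ∉ Metric.ball c r := by
      by_contra h
      push_neg at h
      exact hnot h
    have hyr : r ≤ dist y c := by
      rw [Metric.mem_ball] at hyout; linarith [not_lt.mp hyout]
    have hne : (dyadicCube d (l - 1) (fun i => (j i : ℕ) / 2) ∩
        Metric.sphere c r).Nonempty :=
      convex_meets_sphere (dyadicCube_convex d (l - 1) _) hptparent hy hptball hyr
    show Q (f j)
    rw [hQ]
    convert hne using 3
  · -- fibers have size ≤ 2^d
    intro b _
    have : ((Finset.univ.filter P).filter fun j => f j = b).card ≤
        (Finset.univ : Finset (Fin d → Fin 2)).card := by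
      apply Finset.card_le_card_of_injOn
        (fun j i => (⟨(j i : ℕ) % 2, Nat.mod_lt _ (by norm_num)⟩ : Fin 2))
        (fun _ _ => Finset.mem_univ _)
      intro j hj j' hj' hmod
      simp only [Finset.mem_coe, Finset.mem_filter] at hj hj'
      funext i
      have hdiv : (j i : ℕ) / 2 = (j' i : ℕ) / 2 := by
        have h1 := congrFun hj.2 i
        have h2 := congrFun hj'.2 i
        have := h1.trans h2.symm
        simpa [hfdef, Fin.ext_iff] using this
      have hmod' : (j i : ℕ) % 2 = (j' i : ℕ) % 2 := by
        have := congrFun hmod i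
        simpa [Fin.ext_iff] using this
      apply Fin.ext
      omega
    simpa using this
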